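/- For noise distribution F(x) = Φ(x/σ) with σ > 0, if two parameter triples (A, c, σ) and (Â, ĉ, σ̂) induce the same transition matrix of the binary observation model, then c_i/σ = ĉ_i/σ̂ and a_{ij}/σ = â_{ij}/σ̂ for all i, j; i.e., the model is identifiable up to a common positive scaling of each (A_i, c_i) by the noise standard deviation. -/

import Mathlib

noncomputable def Phi (x : ℝ) : ℝ :=
  ∫ t in Set.Iic x, (Real.sqrt (2 * Real.pi))⁻¹ * Real.exp (-t ^ 2 / 2)

noncomputable def transS {n : ℕ} (A : Matrix (Fin n) (Fin n) ℝ) (c : Fin n → ℝ)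
    (σ : ℝ) (u s : Fin n → Bool) : ℝ :=
  ∏ i, (if s i then 1 - Phi ((c i - ∑ j, A i j * (if u j then (1 : ℝ) else 0)) / σ)
        else Phi ((c i - ∑ j, A i j * (if u j then (1 : ℝ) else 0)) / σ))

lemma gauss_integrable : MeasureTheory.Integrable
    (fun t : ℝ => (Real.sqrt (2 * Real.pi))⁻¹ * Real.exp (-t ^ 2 / 2)) := by
  have h := (integrable_exp_neg_mul_sq (by norm_num : (0:ℝ) < 1/2)).const_mul
    (Real.sqrt (2 * Real.pi))⁻¹
  convert h using 2 with t
  ring_nf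

lemma gauss_pos (t : ℝ) : 0 < (Real.sqrt (2 * Real.pi))⁻¹ * Real.exp (-t ^ 2 / 2) := by
  positivity

lemma Phi_strictMono : StrictMono Phi := by
  intro a b hab
  have hsplit : Phi b = Phi a + ∫ t in Set.Ioc a b,
      (Real.sqrt (2 * Real.pi))⁻¹ * Real.exp (-t ^ 2 / 2) := by
    rw [Phi, Phi, ← MeasureTheory.setIntegral_union (Set.Iic_disjoint_Ioc le_rfl)
      measurableSet_Ioc (gauss_integrable.integrableOn) (gauss_integrable.integrableOn),
      Set.Iic_union_Ioc_eq_Iic hab.le]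
  have hpos : 0 < ∫ t in Set.Ioc a b,
      (Real.sqrt (2 * Real.pi))⁻¹ * Real.exp (-t ^ 2 / 2) := by
    rw [← intervalIntegral.integral_of_le hab.le]
    exact intervalIntegral.intervalIntegral_pos_of_pos_on
      gauss_integrable.intervalIntegrable (fun t _ => gauss_pos t) hab
  linarith

lemma Phi_pos (x : ℝ) : 0 < Phi x := by
  have h0 : 0 ≤ Phi (x - 1) := by
    apply MeasureTheory.setIntegral_nonneg measurableSet_Iic
    exact fun t _ => (gauss_pos t).le
  have := Phi_strictMono (by linarith : x - 1 < x)
  linarith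


theorem stmt9 {n : ℕ} (hn : 2 ≤ n)
    (A Ahat : Matrix (Fin n) (Fin n) ℝ) (c chat : Fin n → ℝ)
    (σ σhat : ℝ) (hσ : 0 < σ) (hσhat : 0 < σhat)
    (h : ∀ u s : Fin n → Bool, transS A c σ u s = transS Ahat chat σhat u s) :
    (∀ i, c i / σ = chat i / σhat) ∧ (∀ i j, A i j / σ = Ahat i j / σhat) := by
  set x : (Fin n → Bool) → Fin n → ℝ :=
    fun u i => (c i - ∑ j, A i j * (if u j then (1 : ℝ) else 0)) / σ with hx
  set y : (Fin n → Bool) → Fin n → ℝ :=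
    fun u i => (chat i - ∑ j, Ahat i j * (if u j then (1 : ℝ) else 0)) / σhat with hy
  have key : ∀ (u : Fin n → Bool) (i : Fin n), x u i = y u i := by
    intro u i
    have h0 := h u (fun _ => false)
    have h1 := h u (fun j => j == i)
    simp only [transS, Bool.false_eq_true, if_false, beq_iff_eq, ← hx, ← hy] at h0 h1
    rw [← Finset.mul_prod_erase Finset.univ _ (Finset.mem_univ i),
        ← Finset.mul_prod_erase Finset.univ
          (fun j => if j = i then 1 - Phi (y u j) else Phi (y u j)) (Finset.mem_univ i)] at h1
    rw [if_pos rfl, if_pos rfl] at h1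
    rw [Finset.prod_congr rfl (fun j hj => if_neg (Finset.mem_erase.mp hj).1),
        Finset.prod_congr rfl (fun j hj => if_neg (Finset.mem_erase.mp hj).1)] at h1
    rw [← Finset.mul_prod_erase Finset.univ _ (Finset.mem_univ i),
        ← Finset.mul_prod_erase Finset.univ (fun j => Phi (y u j)) (Finset.mem_univ i)] at h0
    set E := ∏ j ∈ Finset.univ.erase i, Phi (x u j) with hE
    set F := ∏ j ∈ Finset.univ.erase i, Phi (y u j) with hF
    have hEpos : 0 < E := Finset.prod_pos fun j _ => Phi_pos _
    have hEF : E = F := by ring_nf at h0 h1; linarith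
    rw [hEF] at h0
    have : Phi (x u i) = Phi (y u i) := by
      have hFpos : 0 < F := hEF ▸ hEpos
      exact mul_right_cancel₀ hFpos.ne' h0
    exact Phi_strictMono.injective this
  constructor
  · intro i
    have := key (fun _ => false) i
    simpa [hx, hy] using this
  · intro i j
    have hc := key (fun _ => false) i
    have ha := key (fun k => k == j) i
    simp only [hx, hy, Bool.false_eq_true, if_false, mul_zero, Finset.sum_const_zero,
      sub_zero, beq_iff_eq, mul_ite, mul_one, Finset.sum_ite_eq', Finset.mem_univ,
      if_pos] at hc ha
    rw [sub_div, sub_div] at ha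
    linarith
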